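/- (Generalized Schur–Weyl duality.) Fix N ≥ 1, n ≥ 1, and d : Fin N → ℕ with d i ≥ 1. Let the index type be J := Π i : Fin N, (Fin n → Fin (d i)). For π : Fin N → Equiv.Perm (Fin n), let P(π) : Matrix J J ℂ be the permutation matrix of the bijection sending h : J to the function i ↦ (h i) ∘ (π i)⁻¹, and for a family U with U i ∈ Matrix.unitaryGroup (Fin (d i)) ℂ let Q(U) : Matrix J J ℂ be the matrix with entries Q(U)_{h,g} = Πᵢ Π_{k : Fin n} (U i)_{h i k, g i k} (that is, (U 0)^{⊗n} ⊗ ⋯ ⊗ (U (N-1))^{⊗n}). Then: (a) a matrix X : Matrix J J ℂ commutes with P(π) for every π : Fin N → Equiv.Perm (Fin n) if and only if X lies in the ℂ-linear span of {Q(U) : each U i unitary}; (b) X commutes with Q(U) for every such family U if and only if X lies in the ℂ-linear span of {P(π) : π : Fin N → Equiv.Perm (Fin n)}. -/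

import Mathlib

open Matrix

section DualHelper

lemma mem_span_of_dual {M : Type*} [AddCommGroup M] [Module ℂ M] (s : Set M) (x : M)
    (h : ∀ f : Module.Dual ℂ M, (∀ y ∈ s, f y = 0) → f x = 0) :
    x ∈ Submodule.span ℂ s := by
  by_contra hx
  obtain ⟨f, hfx, hf⟩ := (Submodule.span ℂ s).exists_dual_map_eq_bot_of_notMem hx inferInstance
  refine hfx (h f fun y hy => ?_)
  have : f y ∈ (Submodule.span ℂ s).map f :=
    Submodule.mem_map_of_mem (Submodule.subset_span hy)
  rwa [hf, Submodule.mem_bot] at this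

lemma dual_matrix_repr {α β : Type*} [Fintype α] [DecidableEq α] [Fintype β] [DecidableEq β]
    (f : Module.Dual ℂ (Matrix α β ℂ)) (Y : Matrix α β ℂ) :
    f Y = ∑ a, ∑ b, Y a b * f (Matrix.single a b 1) := by
  conv_lhs => rw [Matrix.matrix_eq_sum_single Y]
  rw [map_sum]
  refine Finset.sum_congr rfl fun a _ => ?_
  rw [map_sum]
  refine Finset.sum_congr rfl fun b _ => ?_
  have : Matrix.single a b (Y a b) = (Y a b) • Matrix.single a b 1 := by
    rw [Matrix.smul_single, smul_eq_mul, mul_one]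
  rw [this, _root_.map_smul, smul_eq_mul]

end DualHelper

/-- Permutation matrix of the bijection on `Π i : Fin N, (Fin n → Fin (d i))`
sending `h` to `fun i => (h i) ∘ (π i)⁻¹`. -/
noncomputable def permTensorMatFam {N : ℕ} (d : Fin N → ℕ) (n : ℕ)
    (π : Fin N → Equiv.Perm (Fin n)) :
    Matrix (∀ i, Fin n → Fin (d i)) (∀ i, Fin n → Fin (d i)) ℂ :=
  Matrix.of fun h g => if (fun i k => h i ((π i)⁻¹ k)) = g then 1 else 0

/-- The matrix `(U 0)^{⊗n} ⊗ ⋯ ⊗ (U (N-1))^{⊗n}`. -/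
noncomputable def collectiveMatFam {N : ℕ} (d : Fin N → ℕ) (n : ℕ)
    (U : ∀ i, Matrix (Fin (d i)) (Fin (d i)) ℂ) :
    Matrix (∀ i, Fin n → Fin (d i)) (∀ i, Fin n → Fin (d i)) ℂ :=
  Matrix.of fun h g => ∏ i, ∏ k, U i (h i k) (g i k)

namespace SW

variable {N n : ℕ} {d : Fin N → ℕ}

/-- The action of a family of permutations on the index type. -/
def act (π : Fin N → Equiv.Perm (Fin n)) (h : ∀ i, Fin n → Fin (d i)) :
    ∀ i, Fin n → Fin (d i) := fun i k => h i ((π i)⁻¹ k)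

lemma act_act (π π' : Fin N → Equiv.Perm (Fin n)) (h : ∀ i, Fin n → Fin (d i)) :
    act π (act π' h) = act (fun i => π i * π' i) h := by
  funext i k
  simp [act, _root_.mul_inv_rev, Equiv.Perm.mul_apply]

lemma act_one (h : ∀ i, Fin n → Fin (d i)) : act (fun _ => 1) h = h := by
  funext i k; simp [act]

lemma act_eq_iff (π : Fin N → Equiv.Perm (Fin n)) (h g : ∀ i, Fin n → Fin (d i)) :
    act π h = g ↔ h = act (fun i => (π i)⁻¹) g := by
  constructor
  · rintro rfl
    rw [act_act]
    simp only [inv_mul_cancel]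
    exact (act_one h).symm
  · rintro rfl
    rw [act_act]
    simp only [mul_inv_cancel]
    exact act_one g

lemma P_apply (π : Fin N → Equiv.Perm (Fin n)) (h g : ∀ i, Fin n → Fin (d i)) :
    permTensorMatFam d n π h g = if act π h = g then 1 else 0 := rfl

lemma Q_apply (U : ∀ i, Matrix (Fin (d i)) (Fin (d i)) ℂ) (h g : ∀ i, Fin n → Fin (d i)) :
    collectiveMatFam d n U h g = ∏ i, ∏ k, U i (h i k) (g i k) := rfl

lemma P_mul (π π' : Fin N → Equiv.Perm (Fin n)) :
    permTensorMatFam d n π * permTensorMatFam d n π'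
      = permTensorMatFam d n (fun i => π' i * π i) := by
  ext h g
  rw [Matrix.mul_apply]
  simp only [P_apply, ite_mul, one_mul, zero_mul]
  rw [Finset.sum_ite_eq Finset.univ (act π h) (fun m => if act π' m = g then 1 else 0)]
  simp only [Finset.mem_univ, if_true, act_act]

lemma P_one : permTensorMatFam d n (fun _ => 1) = 1 := by
  ext h g
  rw [P_apply, act_one, Matrix.one_apply]

lemma P_star (π : Fin N → Equiv.Perm (Fin n)) :
    (permTensorMatFam d n π)ᴴ = permTensorMatFam d n (fun i => (π i)⁻¹) := by
  ext h g
  rw [Matrix.conjTranspose_apply, P_apply, P_apply]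
  have hiff : act π g = h ↔ act (fun i => (π i)⁻¹) h = g := by
    rw [act_eq_iff]; exact ⟨fun e => e.symm, fun e => e.symm⟩
  by_cases hc : act (fun i => (π i)⁻¹) h = g
  · rw [if_pos hc, if_pos (hiff.mpr hc)]; simp
  · rw [if_neg hc, if_neg (fun e => hc (hiff.mp e))]; simp

lemma mul_P_apply (X : Matrix (∀ i, Fin n → Fin (d i)) (∀ i, Fin n → Fin (d i)) ℂ)
    (π : Fin N → Equiv.Perm (Fin n)) (h g : ∀ i, Fin n → Fin (d i)) :
    (X * permTensorMatFam d n π) h g = X h (act (fun i => (π i)⁻¹) g) := by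
  rw [Matrix.mul_apply]
  have : ∀ m, X h m * (if act π m = g then (1:ℂ) else 0)
      = if m = act (fun i => (π i)⁻¹) g then X h m else 0 := by
    intro m
    by_cases hm : m = act (fun i => (π i)⁻¹) g
    · rw [if_pos hm, if_pos ((act_eq_iff π m g).mpr hm), mul_one]
    · rw [if_neg hm, if_neg (fun e => hm ((act_eq_iff π m g).mp e)), mul_zero]
  simp only [P_apply]
  rw [Finset.sum_congr rfl (fun m _ => this m)]
  rw [Finset.sum_ite_eq' Finset.univ (act (fun i => (π i)⁻¹) g) (fun m => X h m)]
  simp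

lemma P_mul_apply (X : Matrix (∀ i, Fin n → Fin (d i)) (∀ i, Fin n → Fin (d i)) ℂ)
    (π : Fin N → Equiv.Perm (Fin n)) (h g : ∀ i, Fin n → Fin (d i)) :
    (permTensorMatFam d n π * X) h g = X (act π h) g := by
  rw [Matrix.mul_apply]
  simp only [P_apply, ite_mul, one_mul, zero_mul]
  rw [Finset.sum_ite_eq Finset.univ (act π h) (fun m => X m g)]
  simp

lemma invariant_of_comm {X : Matrix (∀ i, Fin n → Fin (d i)) (∀ i, Fin n → Fin (d i)) ℂ}
    (hX : ∀ π : Fin N → Equiv.Perm (Fin n),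
      X * permTensorMatFam d n π = permTensorMatFam d n π * X)
    (π : Fin N → Equiv.Perm (Fin n)) (h g : ∀ i, Fin n → Fin (d i)) :
    X (act π h) (act π g) = X h g := by
  have e := congrFun (congrFun (hX π) h) (act π g)
  rw [mul_P_apply, P_mul_apply, act_act] at e
  simp only [inv_mul_cancel] at e
  rw [act_one] at e
  exact e.symm

end SW

namespace SW

variable {N n : ℕ} {d : Fin N → ℕ}

lemma Q_mul (U V : ∀ i, Matrix (Fin (d i)) (Fin (d i)) ℂ) :
    collectiveMatFam d n U * collectiveMatFam d n V
      = collectiveMatFam d n (fun i => U i * V i) := by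
  ext h g
  rw [Matrix.mul_apply, Q_apply]
  have e1 : ∀ m : ∀ i, Fin n → Fin (d i),
      collectiveMatFam d n U h m * collectiveMatFam d n V m g
        = ∏ i, ∏ k, (U i (h i k) (m i k) * V i (m i k) (g i k)) := by
    intro m
    rw [Q_apply, Q_apply, ← Finset.prod_mul_distrib]
    exact Finset.prod_congr rfl fun i _ => (Finset.prod_mul_distrib).symm
  rw [Finset.sum_congr rfl (fun m _ => e1 m)]
  have e2 : ∑ m : ∀ i, Fin n → Fin (d i),
      ∏ i, ∏ k, (U i (h i k) (m i k) * V i (m i k) (g i k))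
      = ∏ i, ∑ mi : Fin n → Fin (d i), ∏ k, (U i (h i k) (mi k) * V i (mi k) (g i k)) := by
    rw [Finset.prod_univ_sum, Fintype.piFinset_univ]
  rw [e2]
  refine Finset.prod_congr rfl fun i _ => ?_
  have e3 : ∑ mi : Fin n → Fin (d i), ∏ k, (U i (h i k) (mi k) * V i (mi k) (g i k))
      = ∏ k, ∑ x : Fin (d i), U i (h i k) x * V i x (g i k) := by
    rw [Finset.prod_univ_sum, Fintype.piFinset_univ]
  rw [e3]
  exact Finset.prod_congr rfl fun k _ => (Matrix.mul_apply).symm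

lemma Q_one : collectiveMatFam d n (fun _ => 1) = 1 := by
  ext h g
  rw [Q_apply, Matrix.one_apply]
  by_cases hc : h = g
  · subst hc
    simp [Matrix.one_apply]
  · rw [if_neg hc]
    have : ∃ i k, h i k ≠ g i k := by
      by_contra hco
      push_neg at hco
      exact hc (funext fun i => funext fun k => hco i k)
    obtain ⟨i, k, hik⟩ := this
    refine Finset.prod_eq_zero (Finset.mem_univ i) ?_
    refine Finset.prod_eq_zero (Finset.mem_univ k) ?_
    simp [Matrix.one_apply, hik]

lemma Q_star (U : ∀ i, Matrix (Fin (d i)) (Fin (d i)) ℂ) :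
    (collectiveMatFam d n U)ᴴ = collectiveMatFam d n (fun i => (U i)ᴴ) := by
  ext h g
  rw [Matrix.conjTranspose_apply, Q_apply, Q_apply]
  rw [star_prod]
  refine Finset.prod_congr rfl fun i _ => ?_
  rw [star_prod]
  exact Finset.prod_congr rfl fun k _ => rfl

lemma PQ_comm (π : Fin N → Equiv.Perm (Fin n)) (M : ∀ i, Matrix (Fin (d i)) (Fin (d i)) ℂ) :
    permTensorMatFam d n π * collectiveMatFam d n M
      = collectiveMatFam d n M * permTensorMatFam d n π := by
  ext h g
  rw [P_mul_apply, mul_P_apply, Q_apply, Q_apply]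
  refine Finset.prod_congr rfl fun i _ => ?_
  have := Equiv.prod_comp (π i) (fun k => M i ((act π h) i k) (g i k))
  rw [← this]
  refine Finset.prod_congr rfl fun k _ => ?_
  simp [act]

end SW

namespace SW

lemma exists_perm_comp {α β : Type*} [Fintype α] [DecidableEq α] [DecidableEq β]
    (f f' : α → β)
    (h : ∀ b, (Finset.univ.filter (fun a => f a = b)).card
            = (Finset.univ.filter (fun a => f' a = b)).card) :
    ∃ σ : Equiv.Perm α, ∀ a, f (σ a) = f' a := by
  have hcard : ∀ b, Fintype.card {a // f' a = b} = Fintype.card {a // f a = b} := by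
    intro b
    rw [Fintype.card_subtype, Fintype.card_subtype]
    exact (h b).symm
  let e : ∀ b, {a // f' a = b} ≃ {a // f a = b} := fun b => Fintype.equivOfCardEq (hcard b)
  refine ⟨(Equiv.sigmaFiberEquiv f').symm.trans
    ((Equiv.sigmaCongrRight e).trans (Equiv.sigmaFiberEquiv f)), fun a => ?_⟩
  show f ((e (f' a) ⟨a, rfl⟩ : {x // f x = f' a}) : α) = f' a
  exact (e (f' a) ⟨a, rfl⟩).2

variable {N n : ℕ} {d : Fin N → ℕ}

/-- The "type/profile" of a pair of indices: for each party `i` and pair of local letters,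
the number of tensor slots where that pair occurs. -/
noncomputable def prof (h g : ∀ i, Fin n → Fin (d i)) : (Σ i : Fin N, Fin (d i) × Fin (d i)) →₀ ℕ :=
  ∑ i, ∑ k, Finsupp.single ⟨i, (h i k, g i k)⟩ 1

lemma prof_apply (h g : ∀ i, Fin n → Fin (d i)) (i : Fin N) (v : Fin (d i) × Fin (d i)) :
    prof h g ⟨i, v⟩ = (Finset.univ.filter (fun k => (h i k, g i k) = v)).card := by
  rw [prof, Finsupp.finset_sum_apply, Finset.sum_eq_single i]
  · rw [Finsupp.finset_sum_apply, Finset.card_filter]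
    refine Finset.sum_congr rfl fun k _ => ?_
    rw [Finsupp.single_apply]
    by_cases hv : (h i k, g i k) = v
    · rw [if_pos (by rw [hv]), if_pos hv]
    · rw [if_neg (by simp [Sigma.mk.inj_iff, hv]), if_neg hv]
  · intro i' _ hne
    rw [Finsupp.finset_sum_apply]
    refine Finset.sum_eq_zero fun k _ => ?_
    rw [Finsupp.single_apply, if_neg]
    intro e
    exact hne (congrArg Sigma.fst e)
  · simp

lemma exists_act_of_prof_eq {h g h' g' : ∀ i, Fin n → Fin (d i)}
    (hp : prof h g = prof h' g') :
    ∃ π : Fin N → Equiv.Perm (Fin n), act π h = h' ∧ act π g = g' := by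
  have key : ∀ i : Fin N, ∃ σ : Equiv.Perm (Fin n),
      ∀ k, (h i (σ k), g i (σ k)) = (h' i k, g' i k) := by
    intro i
    refine exists_perm_comp (fun k => (h i k, g i k)) (fun k => (h' i k, g' i k)) fun v => ?_
    have e := DFunLike.congr_fun hp ⟨i, v⟩
    rw [prof_apply, prof_apply] at e
    exact e
  choose σ hσ using key
  refine ⟨fun i => (σ i)⁻¹, ?_, ?_⟩
  · funext i k
    have := congrArg Prod.fst (hσ i k)
    simpa [act] using this
  · funext i k
    have := congrArg Prod.snd (hσ i k)
    simpa [act] using this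

end SW

namespace SW

open MvPolynomial

lemma prod_monomial_one {A V : Type*} (s : Finset A) (t : A → (V →₀ ℕ)) :
    (∏ a ∈ s, MvPolynomial.monomial (t a) (1:ℂ)) = MvPolynomial.monomial (∑ a ∈ s, t a) 1 := by
  induction s using Finset.cons_induction with
  | empty => simp
  | cons a s ha ih =>
    rw [Finset.prod_cons, Finset.sum_cons, ih, MvPolynomial.monomial_mul, mul_one]

variable {N n : ℕ} {d : Fin N → ℕ}

theorem mem_span_Q_all {X : Matrix (∀ i, Fin n → Fin (d i)) (∀ i, Fin n → Fin (d i)) ℂ}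
    (hX : ∀ (π : Fin N → Equiv.Perm (Fin n)) h g, X (act π h) (act π g) = X h g) :
    X ∈ Submodule.span ℂ
      {Y : Matrix (∀ i, Fin n → Fin (d i)) (∀ i, Fin n → Fin (d i)) ℂ |
        ∃ M : ∀ i, Matrix (Fin (d i)) (Fin (d i)) ℂ, Y = collectiveMatFam d n M} := by
  apply mem_span_of_dual
  intro f hf
  set c : (∀ i, Fin n → Fin (d i)) → (∀ i, Fin n → Fin (d i)) → ℂ :=
    fun h g => f (Matrix.single h g 1) with hc
  -- the key polynomial
  set p : MvPolynomial (Σ i : Fin N, Fin (d i) × Fin (d i)) ℂ :=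
    ∑ h : ∀ i, Fin n → Fin (d i), ∑ g : ∀ i, Fin n → Fin (d i),
      MvPolynomial.C (c h g) * ∏ i, ∏ k, MvPolynomial.X ⟨i, (h i k, g i k)⟩ with hp
  have heval : ∀ z : (Σ i : Fin N, Fin (d i) × Fin (d i)) → ℂ,
      MvPolynomial.eval z p = ∑ h : ∀ i, Fin n → Fin (d i), ∑ g : ∀ i, Fin n → Fin (d i),
        c h g * ∏ i, ∏ k, z ⟨i, (h i k, g i k)⟩ := by
    intro z
    rw [hp, map_sum]
    refine Finset.sum_congr rfl fun h _ => ?_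
    rw [map_sum]
    refine Finset.sum_congr rfl fun g _ => ?_
    rw [_root_.map_mul, MvPolynomial.eval_C, MvPolynomial.eval_prod]
    congr 1
    refine Finset.prod_congr rfl fun i _ => ?_
    rw [MvPolynomial.eval_prod]
    exact Finset.prod_congr rfl fun k _ => MvPolynomial.eval_X _
  have hzero : p = 0 := by
    apply MvPolynomial.funext
    intro z
    rw [heval, map_zero]
    have := hf (collectiveMatFam d n (fun i => Matrix.of fun a b => z ⟨i, (a, b)⟩))
      ⟨_, rfl⟩
    rw [dual_matrix_repr] at this
    rw [← this]
    refine Finset.sum_congr rfl fun h _ => Finset.sum_congr rfl fun g _ => ?_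
    rw [Q_apply, mul_comm]
    rfl
  -- monomial form and coefficient extraction
  have pm : p = ∑ h : ∀ i, Fin n → Fin (d i), ∑ g : ∀ i, Fin n → Fin (d i),
      MvPolynomial.monomial (prof h g) (c h g) := by
    rw [hp]
    refine Finset.sum_congr rfl fun h _ => Finset.sum_congr rfl fun g _ => ?_
    have e1 : (∏ i, ∏ k, (MvPolynomial.X ⟨i, (h i k, g i k)⟩ :
        MvPolynomial (Σ i : Fin N, Fin (d i) × Fin (d i)) ℂ))
        = MvPolynomial.monomial (prof h g) 1 := by
      rw [prof]
      rw [← prod_monomial_one]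
      refine Finset.prod_congr rfl fun i _ => ?_
      rw [← prod_monomial_one]
      rfl
    rw [e1, MvPolynomial.C_mul_monomial, mul_one]
  have horb : ∀ c₀ : (Σ i : Fin N, Fin (d i) × Fin (d i)) →₀ ℕ,
      (∑ h : ∀ i, Fin n → Fin (d i), ∑ g : ∀ i, Fin n → Fin (d i),
        if prof h g = c₀ then c h g else 0) = 0 := by
    intro c₀
    have := congrArg (MvPolynomial.coeff c₀) (pm ▸ hzero)
    rw [MvPolynomial.coeff_sum] at this
    simp only [MvPolynomial.coeff_sum, MvPolynomial.coeff_monomial, MvPolynomial.coeff_zero]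
      at this
    exact this
  -- conclude
  rw [dual_matrix_repr]
  rw [← Finset.sum_product' Finset.univ Finset.univ
    (fun h g => X h g * c h g)]
  rw [← Finset.sum_fiberwise_of_maps_to
    (g := fun pr : (∀ i, Fin n → Fin (d i)) × (∀ i, Fin n → Fin (d i)) => prof pr.1 pr.2)
    (t := (Finset.univ ×ˢ Finset.univ).image
      (fun pr : (∀ i, Fin n → Fin (d i)) × (∀ i, Fin n → Fin (d i)) => prof pr.1 pr.2))
    (fun pr hpr => Finset.mem_image_of_mem _ hpr)
    (fun pr => X pr.1 pr.2 * c pr.1 pr.2)]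
  refine Finset.sum_eq_zero fun b hb => ?_
  obtain ⟨pr₀, _, hpr₀⟩ := Finset.mem_image.mp hb
  have hconst : ∀ pr ∈ (Finset.univ ×ˢ Finset.univ).filter
      (fun pr : (∀ i, Fin n → Fin (d i)) × (∀ i, Fin n → Fin (d i)) => prof pr.1 pr.2 = b),
      X pr.1 pr.2 = X pr₀.1 pr₀.2 := by
    intro pr hpr
    have hprb := (Finset.mem_filter.mp hpr).2
    have hpp : prof pr₀.1 pr₀.2 = prof pr.1 pr.2 := by rw [hprb, hpr₀]
    obtain ⟨π, hπ1, hπ2⟩ := exists_act_of_prof_eq hpp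
    rw [← hπ1, ← hπ2, hX]
  calc ∑ pr ∈ (Finset.univ ×ˢ Finset.univ).filter
        (fun pr : (∀ i, Fin n → Fin (d i)) × (∀ i, Fin n → Fin (d i)) => prof pr.1 pr.2 = b),
        X pr.1 pr.2 * c pr.1 pr.2
      = ∑ pr ∈ (Finset.univ ×ˢ Finset.univ).filter
        (fun pr : (∀ i, Fin n → Fin (d i)) × (∀ i, Fin n → Fin (d i)) => prof pr.1 pr.2 = b),
        X pr₀.1 pr₀.2 * c pr.1 pr.2 := by
        refine Finset.sum_congr rfl fun pr hpr => ?_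
        rw [hconst pr hpr]
    _ = X pr₀.1 pr₀.2 * ∑ pr ∈ (Finset.univ ×ˢ Finset.univ).filter
        (fun pr : (∀ i, Fin n → Fin (d i)) × (∀ i, Fin n → Fin (d i)) => prof pr.1 pr.2 = b),
        c pr.1 pr.2 := by rw [Finset.mul_sum]
    _ = 0 := by
        rw [Finset.sum_filter]
        rw [Finset.sum_product' Finset.univ Finset.univ
          (fun h g => if prof h g = b then c h g else 0)]
        rw [horb b, mul_zero]

end SW

namespace SW

open MvPolynomial
open scoped ComplexOrder

set_option linter.unusedSectionVars false

lemma circle_infinite : {w : ℂ | ‖w‖ = 1}.Infinite := by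
  have hinj : Set.InjOn (fun t : ℝ => Complex.exp (t * Complex.I)) (Set.Ioo (0:ℝ) 1) := by
    intro t ht s hs he
    obtain ⟨m, hm⟩ := Complex.exp_eq_exp_iff_exists_int.mp he
    have hm' : (t : ℂ) = (s + m * (2 * Real.pi)) * 1 := by
      have h0 : (t : ℂ) * Complex.I = ((s : ℂ) + m * (2 * Real.pi)) * Complex.I := by
        rw [hm]; ring
      have h1 := mul_right_cancel₀ Complex.I_ne_zero h0
      rw [h1]; ring
    rw [mul_one] at hm'
    have htr : t = s + m * (2 * Real.pi) := by
      have : ((t : ℂ)) = ((s + m * (2 * Real.pi) : ℝ) : ℂ) := by push_cast; exact hm'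
      exact_mod_cast this
    have hmz : m = 0 := by
      by_contra hm0
      have h1 : (1 : ℝ) ≤ |(m : ℝ)| := by
        rw [← Int.cast_abs]
        exact_mod_cast Int.one_le_abs (by exact_mod_cast hm0)
      have h2 : |t - s| < 1 := by
        rw [abs_sub_lt_iff]
        constructor <;> nlinarith [ht.1, ht.2, hs.1, hs.2]
      have h3 : |t - s| = |(m : ℝ)| * (2 * Real.pi) := by
        rw [htr, show s + m * (2 * Real.pi) - s = m * (2 * Real.pi) by ring]
        rw [abs_mul, abs_of_pos (by positivity : (0:ℝ) < 2 * Real.pi)]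
      nlinarith [Real.pi_gt_three]
    rw [hmz] at htr; simpa using htr
  have himg : (fun t : ℝ => Complex.exp (t * Complex.I)) '' (Set.Ioo 0 1) ⊆ {w : ℂ | ‖w‖ = 1} := by
    rintro _ ⟨t, _, rfl⟩
    simp [Complex.norm_exp]
  exact Set.Infinite.mono himg ((Set.Ioo_infinite (by norm_num)).image hinj)

variable {κ : Type*} [Fintype κ] [DecidableEq κ]

lemma update_eval (q : MvPolynomial κ ℂ) (z : κ → ℂ) (j : κ) (w : ℂ) :
    Polynomial.eval w (MvPolynomial.eval₂ Polynomial.C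
        (fun i => if i = j then Polynomial.X else Polynomial.C (z i)) q)
      = MvPolynomial.eval (Function.update z j w) q := by
  have h := MvPolynomial.eval₂_comp_left (Polynomial.evalRingHom w) Polynomial.C
    (fun i => if i = j then Polynomial.X else Polynomial.C (z i)) q
  rw [Polynomial.coe_evalRingHom] at h
  rw [h]
  have h1 : (Polynomial.evalRingHom w).comp Polynomial.C = RingHom.id ℂ := by
    ext a; simp
  have h2 : (Polynomial.eval w ∘ fun i => if i = j then Polynomial.X else Polynomial.C (z i))
      = Function.update z j w := by
    funext i
    by_cases hij : i = j
    · subst hij; simp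
    · simp [hij, Function.update_of_ne hij]
  rw [h1, h2]
  rfl

lemma eval_zero_of_torus (r : MvPolynomial κ ℂ)
    (hr : ∀ z : κ → ℂ, (∀ j, ‖z j‖ = 1) → MvPolynomial.eval z r = 0) :
    ∀ z, MvPolynomial.eval z r = 0 := by
  suffices key : ∀ c : Finset κ, ∀ z : κ → ℂ, (∀ j, j ∉ c → ‖z j‖ = 1) →
      MvPolynomial.eval z r = 0 by
    intro z
    exact key Finset.univ z (fun j hj => absurd (Finset.mem_univ j) hj)
  intro c
  induction c using Finset.induction with
  | empty => exact fun z hz => hr z fun j => hz j (Finset.notMem_empty j)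
  | @insert j c hj ih =>
    intro z hz
    set P := MvPolynomial.eval₂ Polynomial.C
      (fun i => if i = j then Polynomial.X else Polynomial.C (z i)) r with hP
    have hroots : {w : ℂ | ‖w‖ = 1} ⊆ {w : ℂ | P.IsRoot w} := by
      intro w hw
      show P.eval w = 0
      rw [hP, update_eval]
      apply ih
      intro j' hj'
      by_cases e : j' = j
      · subst e; simpa using hw
      · rw [Function.update_of_ne e]
        exact hz j' (by simp [Finset.mem_insert, e, hj'])
    have hP0 : P = 0 := Polynomial.eq_zero_of_infinite_isRoot P
      (Set.Infinite.mono hroots circle_infinite)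
    have h := update_eval r z j (z j)
    rw [← hP, hP0, Function.update_eq_self] at h
    simpa using h.symm

lemma unitary_diag_mem {z : κ → ℂ} (hz : ∀ j, ‖z j‖ = 1) :
    Matrix.diagonal z ∈ Matrix.unitaryGroup κ ℂ := by
  rw [Matrix.mem_unitaryGroup_iff]
  show Matrix.diagonal z * (Matrix.diagonal z)ᴴ = 1
  rw [Matrix.diagonal_conjTranspose, Matrix.diagonal_mul_diagonal]
  have h1 : ∀ j, z j * star (z j) = 1 := by
    intro j
    rw [show star (z j) = (starRingEnd ℂ) (z j) from rfl, Complex.mul_conj]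
    norm_cast
    rw [Complex.normSq_eq_norm_sq, hz j]
    norm_num
  ext a b
  rcases eq_or_ne a b with rfl | hab
  · rw [Matrix.diagonal_apply_eq, Matrix.one_apply_eq]
    exact h1 a
  · rw [Matrix.diagonal_apply_ne _ hab, Matrix.one_apply_ne hab]

theorem eval_zero_of_unitary (p : MvPolynomial (κ × κ) ℂ)
    (hp : ∀ U : Matrix κ κ ℂ, U ∈ Matrix.unitaryGroup κ ℂ →
      MvPolynomial.eval (fun v => U v.1 v.2) p = 0)
    (A : Matrix κ κ ℂ) : MvPolynomial.eval (fun v => A v.1 v.2) p = 0 := by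
  classical
  -- Step A: vanishing on W * diagonal z * V for unitary W, V and arbitrary z
  have stepA : ∀ W ∈ Matrix.unitaryGroup κ ℂ, ∀ V ∈ Matrix.unitaryGroup κ ℂ, ∀ z : κ → ℂ,
      MvPolynomial.eval (fun v => (W * Matrix.diagonal z * V) v.1 v.2) p = 0 := by
    intro W hW V hV z
    set r := MvPolynomial.bind₁
      (fun v : κ × κ => ∑ j : κ, MvPolynomial.C (W v.1 j * V j v.2) * MvPolynomial.X j) p with hr
    have hev : ∀ z' : κ → ℂ, MvPolynomial.eval z' r
        = MvPolynomial.eval (fun v => (W * Matrix.diagonal z' * V) v.1 v.2) p := by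
      intro z'
      rw [hr]
      rw [show (MvPolynomial.eval z' : MvPolynomial κ ℂ → ℂ)
        = ⇑(MvPolynomial.eval₂Hom (RingHom.id ℂ) z') from rfl]
      rw [MvPolynomial.eval₂Hom_bind₁]
      show MvPolynomial.eval₂Hom (RingHom.id ℂ) _ p
        = MvPolynomial.eval₂Hom (RingHom.id ℂ) (fun v : κ × κ => (W * Matrix.diagonal z' * V) v.1 v.2) p
      refine MvPolynomial.eval₂Hom_congr rfl (funext fun v => ?_) rfl
      rw [map_sum]
      have h3 : ∀ j, MvPolynomial.eval₂Hom (RingHom.id ℂ) z'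
          (MvPolynomial.C (W v.1 j * V j v.2) * MvPolynomial.X j) = W v.1 j * z' j * V j v.2 := by
        intro j
        rw [_root_.map_mul]
        simp [mul_comm, mul_assoc, mul_left_comm]
      rw [Finset.sum_congr rfl fun j _ => h3 j]
      rw [Matrix.mul_apply]
      refine (Finset.sum_congr rfl fun j _ => ?_).symm
      rw [Matrix.mul_diagonal]
    have htor : ∀ z' : κ → ℂ, (∀ j, ‖z' j‖ = 1) → MvPolynomial.eval z' r = 0 := by
      intro z' hz'
      rw [hev]
      exact hp _ (mul_mem (mul_mem hW (unitary_diag_mem hz')) hV)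
    have h := eval_zero_of_torus r htor z
    rw [hev] at h
    exact h
  -- Step B: vanishing on invertible matrices
  have stepB : ∀ B : Matrix κ κ ℂ, IsUnit B.det →
      MvPolynomial.eval (fun v => B v.1 v.2) p = 0 := by
    intro B hB
    have hherm : (Bᴴ * B).IsHermitian := Matrix.isHermitian_conjTranspose_mul_self B
    have hpsd : (Bᴴ * B).PosSemidef := Matrix.posSemidef_conjTranspose_mul_self B
    set V : Matrix κ κ ℂ := (hherm.eigenvectorUnitary : Matrix κ κ ℂ) with hV
    have hVmem : V ∈ Matrix.unitaryGroup κ ℂ := SetLike.coe_mem hherm.eigenvectorUnitary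
    set s : κ → ℂ := fun j => (Real.sqrt (hherm.eigenvalues j) : ℂ) with hs
    set Pm : Matrix κ κ ℂ := V * Matrix.diagonal s * Vᴴ with hPm
    have hVV : Vᴴ * V = 1 := Matrix.mem_unitaryGroup_iff'.mp hVmem
    have hsq : Pm * Pm = Bᴴ * B := by
      rw [hPm]
      calc V * Matrix.diagonal s * Vᴴ * (V * Matrix.diagonal s * Vᴴ)
          = V * Matrix.diagonal s * (Vᴴ * V) * Matrix.diagonal s * Vᴴ := by
            simp only [Matrix.mul_assoc]
        _ = V * (Matrix.diagonal s * Matrix.diagonal s) * Vᴴ := by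
            rw [hVV]; simp only [Matrix.mul_one, Matrix.mul_assoc]
        _ = V * Matrix.diagonal (Complex.ofReal ∘ hherm.eigenvalues) * Vᴴ := by
            rw [Matrix.diagonal_mul_diagonal]
            have : (fun i => s i * s i) = Complex.ofReal ∘ hherm.eigenvalues := by
              funext j
              rw [hs]
              show ((Real.sqrt (hherm.eigenvalues j) : ℂ))
                  * ((Real.sqrt (hherm.eigenvalues j) : ℂ)) = _
              rw [← Complex.ofReal_mul, Real.mul_self_sqrt (hpsd.eigenvalues_nonneg j)]
              rfl
            rw [this]
        _ = Bᴴ * B := by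
            conv_rhs => rw [hherm.spectral_theorem]
            rfl
    have hPmH : Pmᴴ = Pm := by
      rw [hPm, Matrix.conjTranspose_mul, Matrix.conjTranspose_mul,
        Matrix.conjTranspose_conjTranspose, Matrix.diagonal_conjTranspose]
      have : star s = s := funext fun j => by rw [hs]; exact Complex.conj_ofReal _
      rw [this, Matrix.mul_assoc]
    have hsdet : IsUnit Pm.det := by
      rw [isUnit_iff_ne_zero]
      intro h0
      have : (Bᴴ * B).det = 0 := by rw [← hsq, Matrix.det_mul, h0, mul_zero]
      rw [Matrix.det_mul, Matrix.det_conjTranspose] at this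
      have hBd : B.det ≠ 0 := hB.ne_zero
      exact hBd (by
        rcases mul_eq_zero.mp this with h | h
        · exact star_eq_zero.mp h
        · exact h)
    set U : Matrix κ κ ℂ := B * Pm⁻¹ with hU
    have hUmem : U ∈ Matrix.unitaryGroup κ ℂ := by
      rw [Matrix.mem_unitaryGroup_iff']
      show (B * Pm⁻¹)ᴴ * (B * Pm⁻¹) = 1
      rw [Matrix.conjTranspose_mul, Matrix.conjTranspose_nonsing_inv, hPmH]
      calc Pm⁻¹ * Bᴴ * (B * Pm⁻¹)
          = Pm⁻¹ * (Bᴴ * B) * Pm⁻¹ := by simp only [Matrix.mul_assoc]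
        _ = Pm⁻¹ * (Pm * Pm) * Pm⁻¹ := by rw [hsq]
        _ = (Pm⁻¹ * Pm) * (Pm * Pm⁻¹) := by simp only [Matrix.mul_assoc]
        _ = 1 := by rw [Matrix.nonsing_inv_mul _ hsdet, Matrix.mul_nonsing_inv _ hsdet, mul_one]
    have hrep : B = (U * V) * Matrix.diagonal s * Vᴴ := by
      have : B = U * Pm := by
        rw [hU, Matrix.nonsing_inv_mul_cancel_right _ _ hsdet]
      rw [this, hPm]
      simp only [Matrix.mul_assoc]
    have h := stepA (U * V) (mul_mem hUmem hVmem) (Vᴴ)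
      (by exact Unitary.star_mem hVmem) s
    rw [← hrep] at h
    exact h
  -- Step C: generic invertibility
  set G : Polynomial ℂ := MvPolynomial.eval₂ Polynomial.C
    (fun v : κ × κ => Polynomial.C (A v.1 v.2) + if v.1 = v.2 then Polynomial.X else 0) p with hG
  have hGev : ∀ t : ℂ, G.eval t
      = MvPolynomial.eval (fun v : κ × κ => (A + t • (1 : Matrix κ κ ℂ)) v.1 v.2) p := by
    intro t
    rw [hG]
    have h := MvPolynomial.eval₂_comp_left (Polynomial.evalRingHom t) Polynomial.C
      (fun v : κ × κ => Polynomial.C (A v.1 v.2) + if v.1 = v.2 then Polynomial.X else 0) p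
    rw [Polynomial.coe_evalRingHom] at h
    rw [h]
    have h1 : (Polynomial.evalRingHom t).comp Polynomial.C = RingHom.id ℂ := by
      ext a; simp
    have h2 : (Polynomial.eval t ∘ fun v : κ × κ =>
        Polynomial.C (A v.1 v.2) + if v.1 = v.2 then Polynomial.X else 0)
        = fun v : κ × κ => (A + t • (1 : Matrix κ κ ℂ)) v.1 v.2 := by
      funext v
      by_cases hv : v.1 = v.2
      · simp [hv, Matrix.add_apply, Matrix.smul_apply, Matrix.one_apply, Function.comp]
      · simp [hv, Matrix.add_apply, Matrix.smul_apply, Matrix.one_apply, Function.comp]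
    rw [h1, h2]
    rfl
  have hfin : {t : ℂ | ¬ IsUnit (A + t • (1 : Matrix κ κ ℂ)).det}.Finite := by
    set D : Polynomial ℂ := (-A).charpoly with hD
    have hDev : ∀ t, D.eval t = (A + t • (1 : Matrix κ κ ℂ)).det := by
      intro t
      rw [hD, Matrix.charpoly]
      rw [show Polynomial.eval t ((-A).charmatrix.det)
        = (Polynomial.evalRingHom t) ((-A).charmatrix.det) from rfl]
      rw [RingHom.map_det]
      congr 1
      ext a b
      rw [RingHom.mapMatrix_apply]
      by_cases hab : a = b
      · subst hab
        rw [Matrix.map_apply, Matrix.charmatrix_apply_eq]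
        simp [Matrix.add_apply, Matrix.smul_apply, Matrix.one_apply, add_comm]
      · rw [Matrix.map_apply, Matrix.charmatrix_apply_ne _ _ _ hab]
        simp [Matrix.add_apply, Matrix.smul_apply, Matrix.one_apply, hab]
    have hD0 : D ≠ 0 := (Matrix.charpoly_monic (-A)).ne_zero
    refine Set.Finite.subset (Polynomial.finite_setOf_isRoot hD0) ?_
    intro t ht
    show D.IsRoot t
    rw [Polynomial.IsRoot, hDev]
    by_contra hne
    exact ht (isUnit_iff_ne_zero.mpr hne)
  have hGzero : G = 0 := by
    apply Polynomial.eq_zero_of_infinite_isRoot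
    have hsub : {t : ℂ | ¬ IsUnit (A + t • (1 : Matrix κ κ ℂ)).det}ᶜ ⊆ {t : ℂ | G.IsRoot t} := by
      intro t ht
      have htu : IsUnit (A + t • (1 : Matrix κ κ ℂ)).det := not_not.mp ht
      show G.eval t = 0
      rw [hGev]
      exact stepB _ htu
    exact Set.Infinite.mono hsub hfin.infinite_compl
  have h := hGev 0
  rw [hGzero] at h
  simp only [Polynomial.eval_zero] at h
  have : A + (0:ℂ) • (1 : Matrix κ κ ℂ) = A := by simp
  rw [this] at h
  exact h.symm

end SW

namespace SW

open MvPolynomial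

variable {κ : Type*} [Fintype κ] [DecidableEq κ]

set_option linter.unusedSectionVars false

lemma q_mem_span (n : ℕ) (A : Matrix κ κ ℂ) :
    (Matrix.of fun (a b : Fin n → κ) => ∏ k, A (a k) (b k)) ∈
      Submodule.span ℂ {Y : Matrix (Fin n → κ) (Fin n → κ) ℂ |
        ∃ U ∈ Matrix.unitaryGroup κ ℂ, Y = Matrix.of fun a b => ∏ k, U (a k) (b k)} := by
  apply mem_span_of_dual
  intro f hf
  set c : (Fin n → κ) → (Fin n → κ) → ℂ := fun a b => f (Matrix.single a b 1) with hc
  set p : MvPolynomial (κ × κ) ℂ := ∑ a : Fin n → κ, ∑ b : Fin n → κ,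
    MvPolynomial.C (c a b) * ∏ k, MvPolynomial.X (a k, b k) with hp
  have hev : ∀ M : Matrix κ κ ℂ,
      MvPolynomial.eval (fun v => M v.1 v.2) p
        = f (Matrix.of fun a b => ∏ k, M (a k) (b k)) := by
    intro M
    rw [dual_matrix_repr, hp, map_sum]
    refine Finset.sum_congr rfl fun a _ => ?_
    rw [map_sum]
    refine Finset.sum_congr rfl fun b _ => ?_
    rw [_root_.map_mul, MvPolynomial.eval_C, MvPolynomial.eval_prod]
    rw [Finset.prod_congr rfl fun k _ => MvPolynomial.eval_X (f := fun v : κ × κ => M v.1 v.2) (a k, b k)]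
    rw [mul_comm]
    rfl
  have h0 : ∀ U : Matrix κ κ ℂ, U ∈ Matrix.unitaryGroup κ ℂ →
      MvPolynomial.eval (fun v => U v.1 v.2) p = 0 := by
    intro U hU
    rw [hev]
    exact hf _ ⟨U, hU, rfl⟩
  have := eval_zero_of_unitary p h0 A
  rw [hev] at this
  exact this

lemma kron_span {N : ℕ} (κp : Fin N → Type) (s : ∀ i, Set (Matrix (κp i) (κp i) ℂ))
    (w : ∀ i, Matrix (κp i) (κp i) ℂ) (hw : ∀ i, w i ∈ Submodule.span ℂ (s i)) :
    (Matrix.of fun h g : ∀ i, κp i => ∏ i, w i (h i) (g i)) ∈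
      Submodule.span ℂ {Y : Matrix (∀ i, κp i) (∀ i, κp i) ℂ |
        ∃ u : ∀ i, Matrix (κp i) (κp i) ℂ,
        (∀ i, u i ∈ s i) ∧ Y = Matrix.of fun h g => ∏ i, u i (h i) (g i)} := by
  induction N with
  | zero =>
    apply Submodule.subset_span
    exact ⟨fun i => i.elim0, fun i => i.elim0, by ext h g; simp⟩
  | succ N ih =>
    have key : ∀ (R : Matrix (∀ i : Fin N, κp i.succ) (∀ i : Fin N, κp i.succ) ℂ),
        R ∈ Submodule.span ℂ {Y : Matrix (∀ i : Fin N, κp i.succ) (∀ i : Fin N, κp i.succ) ℂ |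
          ∃ u : ∀ i : Fin N, Matrix (κp i.succ) (κp i.succ) ℂ,
          (∀ i, u i ∈ s i.succ) ∧ Y = Matrix.of fun h g => ∏ i, u i (h i) (g i)} →
        ∀ (w₀ : Matrix (κp 0) (κp 0) ℂ), w₀ ∈ Submodule.span ℂ (s 0) →
        (Matrix.of fun h g : ∀ i : Fin (N+1), κp i =>
            w₀ (h 0) (g 0) * R (fun i => h i.succ) (fun i => g i.succ)) ∈
          Submodule.span ℂ {Y : Matrix (∀ i : Fin (N+1), κp i) (∀ i : Fin (N+1), κp i) ℂ |
            ∃ u : ∀ i : Fin (N+1), Matrix (κp i) (κp i) ℂ,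
            (∀ i, u i ∈ s i) ∧ Y = Matrix.of fun h g => ∏ i, u i (h i) (g i)} := by
      intro R hR
      induction hR using Submodule.span_induction with
      | mem R hRmem =>
        obtain ⟨u, hu, rfl⟩ := hRmem
        intro w₀ hw₀
        induction hw₀ using Submodule.span_induction with
        | mem w₀ hw₀mem =>
          apply Submodule.subset_span
          refine ⟨Fin.cons w₀ u, fun i => ?_, ?_⟩
          · refine Fin.cases ?_ (fun j => ?_) i
            · rw [Fin.cons_zero]; exact hw₀mem
            · rw [Fin.cons_succ]; exact hu j
          · ext h g
            simp only [Matrix.of_apply]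
            rw [Fin.prod_univ_succ, Fin.cons_zero]
            congr 1
        | zero =>
          have : (Matrix.of fun h g : ∀ i : Fin (N+1), κp i =>
              (0 : Matrix (κp 0) (κp 0) ℂ) (h 0) (g 0) *
                (Matrix.of fun h g : ∀ i : Fin N, κp i.succ => ∏ i, u i (h i) (g i))
                  (fun i => h i.succ) (fun i => g i.succ)) = 0 := by
            ext h g; simp
          rw [this]
          exact Submodule.zero_mem _
        | add x y hx hy ihx ihy =>
          have : (Matrix.of fun h g : ∀ i : Fin (N+1), κp i =>
              (x + y) (h 0) (g 0) * (Matrix.of fun h g : ∀ i : Fin N, κp i.succ =>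
                ∏ i, u i (h i) (g i)) (fun i => h i.succ) (fun i => g i.succ))
              = (Matrix.of fun h g : ∀ i : Fin (N+1), κp i =>
                  x (h 0) (g 0) * (Matrix.of fun h g : ∀ i : Fin N, κp i.succ =>
                    ∏ i, u i (h i) (g i)) (fun i => h i.succ) (fun i => g i.succ))
              + (Matrix.of fun h g : ∀ i : Fin (N+1), κp i =>
                  y (h 0) (g 0) * (Matrix.of fun h g : ∀ i : Fin N, κp i.succ =>
                    ∏ i, u i (h i) (g i)) (fun i => h i.succ) (fun i => g i.succ)) := by
            ext h g; simp [add_mul]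
          rw [this]
          exact Submodule.add_mem _ ihx ihy
        | smul a x hx ihx =>
          have : (Matrix.of fun h g : ∀ i : Fin (N+1), κp i =>
              (a • x) (h 0) (g 0) * (Matrix.of fun h g : ∀ i : Fin N, κp i.succ =>
                ∏ i, u i (h i) (g i)) (fun i => h i.succ) (fun i => g i.succ))
              = a • (Matrix.of fun h g : ∀ i : Fin (N+1), κp i =>
                  x (h 0) (g 0) * (Matrix.of fun h g : ∀ i : Fin N, κp i.succ =>
                    ∏ i, u i (h i) (g i)) (fun i => h i.succ) (fun i => g i.succ)) := by
            ext h g; simp [mul_assoc]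
          rw [this]
          exact Submodule.smul_mem _ a ihx
      | zero =>
        intro w₀ _
        have : (Matrix.of fun h g : ∀ i : Fin (N+1), κp i =>
            w₀ (h 0) (g 0) * (0 : Matrix (∀ i : Fin N, κp i.succ) (∀ i : Fin N, κp i.succ) ℂ)
              (fun i => h i.succ) (fun i => g i.succ)) = 0 := by
          ext h g; simp
        rw [this]
        exact Submodule.zero_mem _
      | add x y hx hy ihx ihy =>
        intro w₀ hw₀
        have : (Matrix.of fun h g : ∀ i : Fin (N+1), κp i =>
            w₀ (h 0) (g 0) * (x + y) (fun i => h i.succ) (fun i => g i.succ))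
            = (Matrix.of fun h g : ∀ i : Fin (N+1), κp i =>
                w₀ (h 0) (g 0) * x (fun i => h i.succ) (fun i => g i.succ))
            + (Matrix.of fun h g : ∀ i : Fin (N+1), κp i =>
                w₀ (h 0) (g 0) * y (fun i => h i.succ) (fun i => g i.succ)) := by
          ext h g; simp [mul_add]
        rw [this]
        exact Submodule.add_mem _ (ihx w₀ hw₀) (ihy w₀ hw₀)
      | smul a x hx ihx =>
        intro w₀ hw₀
        have : (Matrix.of fun h g : ∀ i : Fin (N+1), κp i =>
            w₀ (h 0) (g 0) * (a • x) (fun i => h i.succ) (fun i => g i.succ))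
            = a • (Matrix.of fun h g : ∀ i : Fin (N+1), κp i =>
                w₀ (h 0) (g 0) * x (fun i => h i.succ) (fun i => g i.succ)) := by
          ext h g
          simp [Matrix.smul_apply, smul_eq_mul]
          ring
        rw [this]
        exact Submodule.smul_mem _ a (ihx w₀ hw₀)
    have hmain : (Matrix.of fun h g : ∀ i : Fin (N+1), κp i => ∏ i, w i (h i) (g i))
        = Matrix.of fun h g : ∀ i : Fin (N+1), κp i =>
            (w 0) (h 0) (g 0) * (Matrix.of fun h g : ∀ i : Fin N, κp i.succ =>
              ∏ i, (w i.succ) (h i) (g i)) (fun i => h i.succ) (fun i => g i.succ) := by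
      ext h g
      rw [Matrix.of_apply, Matrix.of_apply, Fin.prod_univ_succ]
      rfl
    rw [hmain]
    exact key _ (ih (fun i => κp i.succ) (fun i => s i.succ) (fun i => w i.succ)
      (fun i => hw i.succ)) (w 0) (hw 0)

end SW

namespace SW

variable {N n : ℕ} {d : Fin N → ℕ}

lemma Q_mem_unitary_span (M : ∀ i, Matrix (Fin (d i)) (Fin (d i)) ℂ) :
    collectiveMatFam d n M ∈ Submodule.span ℂ
      {Y : Matrix (∀ i, Fin n → Fin (d i)) (∀ i, Fin n → Fin (d i)) ℂ |
        ∃ U : ∀ i, Matrix (Fin (d i)) (Fin (d i)) ℂ,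
          (∀ i, U i ∈ Matrix.unitaryGroup (Fin (d i)) ℂ) ∧ Y = collectiveMatFam d n U} := by
  have h := kron_span (fun i => Fin n → Fin (d i))
    (fun i => {Y : Matrix (Fin n → Fin (d i)) (Fin n → Fin (d i)) ℂ |
      ∃ U ∈ Matrix.unitaryGroup (Fin (d i)) ℂ, Y = Matrix.of fun a b => ∏ k, U (a k) (b k)})
    (fun i => Matrix.of fun a b => ∏ k, (M i) (a k) (b k))
    (fun i => q_mem_span n (M i))
  have heq : collectiveMatFam d n M
      = Matrix.of fun h g : ∀ i, Fin n → Fin (d i) =>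
          ∏ i, (Matrix.of fun a b => ∏ k, (M i) (a k) (b k)) (h i) (g i) := rfl
  rw [heq]
  refine Submodule.span_mono ?_ h
  rintro Y ⟨u, hu, rfl⟩
  choose Ufun hmem hequ using hu
  refine ⟨Ufun, hmem, ?_⟩
  ext h g
  rw [Q_apply]
  simp only [Matrix.of_apply]
  refine Finset.prod_congr rfl fun i _ => ?_
  rw [hequ i]
  rfl

theorem part_a_hard {X : Matrix (∀ i, Fin n → Fin (d i)) (∀ i, Fin n → Fin (d i)) ℂ}
    (hX : ∀ π : Fin N → Equiv.Perm (Fin n),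
      X * permTensorMatFam d n π = permTensorMatFam d n π * X) :
    X ∈ Submodule.span ℂ
      {Y : Matrix (∀ i, Fin n → Fin (d i)) (∀ i, Fin n → Fin (d i)) ℂ |
        ∃ U : ∀ i, Matrix (Fin (d i)) (Fin (d i)) ℂ,
          (∀ i, U i ∈ Matrix.unitaryGroup (Fin (d i)) ℂ) ∧ Y = collectiveMatFam d n U} := by
  have h1 := mem_span_Q_all (fun π h g => invariant_of_comm hX π h g)
  exact Submodule.span_le.mpr (by rintro Y ⟨M, rfl⟩; exact Q_mem_unitary_span M) h1

lemma comm_P_of_mem {X : Matrix (∀ i, Fin n → Fin (d i)) (∀ i, Fin n → Fin (d i)) ℂ}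
    (hX : X ∈ Submodule.span ℂ
      {Y : Matrix (∀ i, Fin n → Fin (d i)) (∀ i, Fin n → Fin (d i)) ℂ |
        ∃ U : ∀ i, Matrix (Fin (d i)) (Fin (d i)) ℂ,
          (∀ i, U i ∈ Matrix.unitaryGroup (Fin (d i)) ℂ) ∧ Y = collectiveMatFam d n U})
    (π : Fin N → Equiv.Perm (Fin n)) :
    X * permTensorMatFam d n π = permTensorMatFam d n π * X := by
  induction hX using Submodule.span_induction with
  | mem Y hY =>
    obtain ⟨U, _, rfl⟩ := hY
    exact (PQ_comm π U).symm
  | zero => simp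
  | add x y _ _ ihx ihy => rw [add_mul, mul_add, ihx, ihy]
  | smul a x _ ihx => rw [smul_mul_assoc, mul_smul_comm, ihx]

lemma comm_Q_of_mem {X : Matrix (∀ i, Fin n → Fin (d i)) (∀ i, Fin n → Fin (d i)) ℂ}
    (hX : X ∈ Submodule.span ℂ
      {Y : Matrix (∀ i, Fin n → Fin (d i)) (∀ i, Fin n → Fin (d i)) ℂ |
        ∃ π : Fin N → Equiv.Perm (Fin n), Y = permTensorMatFam d n π})
    (M : ∀ i, Matrix (Fin (d i)) (Fin (d i)) ℂ) :
    X * collectiveMatFam d n M = collectiveMatFam d n M * X := by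
  induction hX using Submodule.span_induction with
  | mem Y hY =>
    obtain ⟨π, rfl⟩ := hY
    exact PQ_comm π M
  | zero => simp
  | add x y _ _ ihx ihy => rw [add_mul, mul_add, ihx, ihy]
  | smul a x _ ihx => rw [smul_mul_assoc, mul_smul_comm, ihx]

end SW

namespace SW

variable {η : Type*} [Fintype η] [DecidableEq η]

set_option linter.unusedSectionVars false

lemma toEuclideanLin_mul (a b : Matrix η η ℂ) :
    Matrix.toEuclideanLin (a * b)
      = (Matrix.toEuclideanLin a) ∘ₗ (Matrix.toEuclideanLin b : EuclideanSpace ℂ η →ₗ[ℂ] EuclideanSpace ℂ η) := by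
  apply LinearMap.ext
  intro v
  rw [LinearMap.comp_apply, Matrix.toEuclideanLin_apply, Matrix.toEuclideanLin_apply,
    Matrix.toEuclideanLin_apply, WithLp.ofLp_toLp, Matrix.mulVec_mulVec]

lemma toEuclideanLin_one :
    Matrix.toEuclideanLin (1 : Matrix η η ℂ) = LinearMap.id := by
  apply LinearMap.ext
  intro v
  rw [Matrix.toEuclideanLin_apply, Matrix.one_mulVec]
  rfl

theorem dct_vec (B : Submodule ℂ (Matrix η η ℂ))
    (h1 : (1 : Matrix η η ℂ) ∈ B)
    (hmul : ∀ a ∈ B, ∀ b ∈ B, a * b ∈ B)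
    (hstar : ∀ a ∈ B, aᴴ ∈ B)
    (x : Matrix η η ℂ)
    (hx : ∀ y : Matrix η η ℂ, (∀ b ∈ B, y * b = b * y) → x * y = y * x)
    (v : EuclideanSpace ℂ η) :
    ∃ a ∈ B, Matrix.toEuclideanLin a v = Matrix.toEuclideanLin x v := by
  classical
  let evv : Matrix η η ℂ →ₗ[ℂ] EuclideanSpace ℂ η :=
    { toFun := fun b => Matrix.toEuclideanLin b v
      map_add' := by
        intro a b
        show Matrix.toEuclideanLin (a + b) v = _
        rw [map_add]; rfl
      map_smul' := by
        intro c a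
        show Matrix.toEuclideanLin (c • a) v = _
        rw [_root_.map_smul]; rfl }
  set W : Submodule ℂ (EuclideanSpace ℂ η) := B.map evv with hW
  set PC : EuclideanSpace ℂ η →L[ℂ] EuclideanSpace ℂ η :=
    W.subtypeL ∘L W.orthogonalProjection with hPC
  set PL : EuclideanSpace ℂ η →ₗ[ℂ] EuclideanSpace ℂ η := PC.toLinearMap with hPL
  have hproj_mem : ∀ u, PL u ∈ W := by
    intro u
    show (W.subtypeL ∘L W.orthogonalProjection) u ∈ W
    simp only [ContinuousLinearMap.comp_apply, Submodule.subtypeL_apply]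
    exact (W.orthogonalProjection u).2
  have hproj_fix : ∀ w ∈ W, PL w = w := by
    intro w hw
    show (W.subtypeL ∘L W.orthogonalProjection) w = w
    simp only [ContinuousLinearMap.comp_apply, Submodule.subtypeL_apply]
    exact (Submodule.starProjection_eq_self_iff (K := W)).mpr hw
  have hsym : PL.IsSymmetric := W.starProjection_isSymmetric
  have hadj : LinearMap.adjoint PL = PL := by
    have := (LinearMap.isSymmetric_iff_isSelfAdjoint PL).mp hsym
    rw [← LinearMap.star_eq_adjoint]
    exact this
  have hWinv : ∀ b ∈ B, ∀ w ∈ W, Matrix.toEuclideanLin b w ∈ W := by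
    rintro b hb w ⟨a, ha, rfl⟩
    have : Matrix.toEuclideanLin b (evv a) = evv (b * a) := by
      show Matrix.toEuclideanLin b (Matrix.toEuclideanLin a v) = Matrix.toEuclideanLin (b * a) v
      rw [toEuclideanLin_mul]
      rfl
    rw [this]
    exact ⟨b * a, hmul b hb a ha, rfl⟩
  have A1 : ∀ b ∈ B, PL ∘ₗ (Matrix.toEuclideanLin b) ∘ₗ PL
      = (Matrix.toEuclideanLin b) ∘ₗ PL := by
    intro b hb
    apply LinearMap.ext
    intro u
    simp only [LinearMap.comp_apply]
    exact hproj_fix _ (hWinv b hb _ (hproj_mem u))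
  have A2 : ∀ b ∈ B, PL ∘ₗ Matrix.toEuclideanLin b = Matrix.toEuclideanLin b ∘ₗ PL := by
    intro b hb
    have hb' := A1 bᴴ (hstar b hb)
    have hadj' : LinearMap.adjoint (PL ∘ₗ Matrix.toEuclideanLin bᴴ ∘ₗ PL)
        = LinearMap.adjoint (Matrix.toEuclideanLin bᴴ ∘ₗ PL) := by rw [hb']
    rw [LinearMap.adjoint_comp, LinearMap.adjoint_comp, hadj,
      ← Matrix.toEuclideanLin_conjTranspose_eq_adjoint, Matrix.conjTranspose_conjTranspose]
      at hadj'
    calc PL ∘ₗ Matrix.toEuclideanLin b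
        = PL ∘ₗ Matrix.toEuclideanLin b ∘ₗ PL := by
          rw [← LinearMap.comp_assoc, hadj']
      _ = Matrix.toEuclideanLin b ∘ₗ PL := A1 b hb
  -- the projection matrix commutes with B
  set pm : Matrix η η ℂ := Matrix.toEuclideanLin.symm PL with hpm
  have hpmL : Matrix.toEuclideanLin pm = PL := by rw [hpm]; exact Matrix.toEuclideanLin.apply_symm_apply PL
  have hpm_comm : ∀ b ∈ B, pm * b = b * pm := by
    intro b hb
    apply Matrix.toEuclideanLin.injective
    rw [toEuclideanLin_mul, toEuclideanLin_mul, hpmL]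
    exact A2 b hb
  have hxpm : Matrix.toEuclideanLin x ∘ₗ PL = PL ∘ₗ Matrix.toEuclideanLin x := by
    have := hx pm hpm_comm
    have h2 := congrArg Matrix.toEuclideanLin this
    rw [toEuclideanLin_mul, toEuclideanLin_mul, hpmL] at h2
    exact h2
  have hvW : v ∈ W := by
    refine ⟨1, h1, ?_⟩
    show Matrix.toEuclideanLin 1 v = v
    rw [toEuclideanLin_one]
    rfl
  have : Matrix.toEuclideanLin x v ∈ W := by
    have e1 : Matrix.toEuclideanLin x v = PL (Matrix.toEuclideanLin x v) := by
      conv_lhs => rw [← hproj_fix v hvW]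
      exact LinearMap.congr_fun hxpm v
    rw [e1]
    exact hproj_mem _
  obtain ⟨a, ha, hav⟩ := this
  exact ⟨a, ha, hav⟩

end SW

namespace SW

variable {η : Type*} [Fintype η] [DecidableEq η]

set_option linter.unusedSectionVars false

/-- The amplification embedding `a ↦ a ⊗ 1`. -/
def emb (a : Matrix η η ℂ) : Matrix (η × η) (η × η) ℂ :=
  Matrix.of fun p q => a p.1 q.1 * (if p.2 = q.2 then 1 else 0)

lemma emb_apply (a : Matrix η η ℂ) (p q : η × η) :
    emb a p q = a p.1 q.1 * (if p.2 = q.2 then 1 else 0) := rfl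

lemma emb_one : emb (1 : Matrix η η ℂ) = 1 := by
  ext p q
  rw [emb_apply, Matrix.one_apply, Matrix.one_apply]
  by_cases h1 : p.1 = q.1 <;> by_cases h2 : p.2 = q.2 <;>
    simp [h1, h2, Prod.ext_iff]

lemma emb_mul (a b : Matrix η η ℂ) : emb a * emb b = emb (a * b) := by
  ext p q
  rw [Matrix.mul_apply, Fintype.sum_prod_type]
  have hin : ∀ r1 : η, ∑ r2 : η, emb a p (r1, r2) * emb b (r1, r2) q
      = a p.1 r1 * b r1 q.1 * (if p.2 = q.2 then 1 else 0) := by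
    intro r1
    have : ∀ r2, emb a p (r1, r2) * emb b (r1, r2) q
        = if p.2 = r2 then (a p.1 r1 * b r1 q.1 * (if r2 = q.2 then 1 else 0)) else 0 := by
      intro r2
      rw [emb_apply, emb_apply]
      by_cases h2 : p.2 = r2
      · rw [if_pos h2, if_pos h2]; ring
      · rw [if_neg h2, if_neg h2]; ring
    rw [Finset.sum_congr rfl fun r2 _ => this r2]
    rw [Finset.sum_ite_eq Finset.univ p.2
      (fun r2 => a p.1 r1 * b r1 q.1 * (if r2 = q.2 then 1 else 0))]
    simp
  rw [Finset.sum_congr rfl fun r1 _ => hin r1]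
  rw [emb_apply, Matrix.mul_apply, Finset.sum_mul]

lemma emb_star (a : Matrix η η ℂ) : (emb a)ᴴ = emb aᴴ := by
  ext p q
  rw [Matrix.conjTranspose_apply, emb_apply, emb_apply, Matrix.conjTranspose_apply]
  by_cases h2 : p.2 = q.2
  · rw [if_pos h2, if_pos h2.symm]
    simp
  · rw [if_neg h2, if_neg (fun e => h2 e.symm)]
    simp

lemma emb_linear_add (a b : Matrix η η ℂ) : emb (a + b) = emb a + emb b := by
  ext p q
  by_cases h : p.2 = q.2 <;> simp [emb_apply, add_mul, h]

lemma emb_linear_smul (c : ℂ) (a : Matrix η η ℂ) : emb (c • a) = c • emb a := by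
  ext p q; simp [emb_apply, Matrix.smul_apply, smul_eq_mul, mul_assoc]

theorem double_commutant (B : Submodule ℂ (Matrix η η ℂ))
    (h1 : (1 : Matrix η η ℂ) ∈ B)
    (hmul : ∀ a ∈ B, ∀ b ∈ B, a * b ∈ B)
    (hstar : ∀ a ∈ B, aᴴ ∈ B)
    (x : Matrix η η ℂ)
    (hx : ∀ y : Matrix η η ℂ, (∀ b ∈ B, y * b = b * y) → x * y = y * x) :
    x ∈ B := by
  classical
  let embL : Matrix η η ℂ →ₗ[ℂ] Matrix (η × η) (η × η) ℂ :=
    { toFun := emb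
      map_add' := emb_linear_add
      map_smul' := emb_linear_smul }
  set B2 : Submodule ℂ (Matrix (η × η) (η × η) ℂ) := B.map embL with hB2
  have h1' : (1 : Matrix (η × η) (η × η) ℂ) ∈ B2 := ⟨1, h1, emb_one⟩
  have hmul' : ∀ a ∈ B2, ∀ b ∈ B2, a * b ∈ B2 := by
    rintro _ ⟨a, ha, rfl⟩ _ ⟨b, hb, rfl⟩
    exact ⟨a * b, hmul a ha b hb, (emb_mul a b).symm⟩
  have hstar' : ∀ a ∈ B2, aᴴ ∈ B2 := by
    rintro _ ⟨a, ha, rfl⟩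
    exact ⟨aᴴ, hstar a ha, (emb_star a).symm⟩
  -- blocks of a matrix over η × η
  have hx2 : ∀ y : Matrix (η × η) (η × η) ℂ,
      (∀ b ∈ B2, y * b = b * y) → emb x * y = y * emb x := by
    intro y hy
    set blk : η → η → Matrix η η ℂ :=
      fun k k' => Matrix.of fun j j' => y (j, k) (j', k') with hblk
    have hblk_comm : ∀ k k', ∀ b ∈ B, blk k k' * b = b * blk k k' := by
      intro k k' b hb
      have h := hy (emb b) ⟨b, hb, rfl⟩
      ext j j'
      have e1 : (y * emb b) (j, k) (j', k') = (blk k k' * b) j j' := by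
        rw [Matrix.mul_apply, Fintype.sum_prod_type, Matrix.mul_apply]
        refine Finset.sum_congr rfl fun r1 _ => ?_
        have : ∀ r2, y (j, k) (r1, r2) * emb b (r1, r2) (j', k')
            = if r2 = k' then y (j, k) (r1, r2) * b r1 j' else 0 := by
          intro r2
          rw [emb_apply]
          by_cases h2 : r2 = k'
          · rw [if_pos h2, if_pos h2]; ring
          · rw [if_neg h2, if_neg h2]; ring
        rw [Finset.sum_congr rfl fun r2 _ => this r2]
        rw [Finset.sum_ite_eq' Finset.univ k' (fun r2 => y (j, k) (r1, r2) * b r1 j')]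
        simp [hblk]
      have e2 : (emb b * y) (j, k) (j', k') = (b * blk k k') j j' := by
        rw [Matrix.mul_apply, Fintype.sum_prod_type, Matrix.mul_apply]
        refine Finset.sum_congr rfl fun r1 _ => ?_
        have : ∀ r2, emb b (j, k) (r1, r2) * y (r1, r2) (j', k')
            = if r2 = k then b j r1 * y (r1, r2) (j', k') else 0 := by
          intro r2
          rw [emb_apply]
          by_cases h2 : k = r2
          · rw [if_pos h2, if_pos h2.symm]; ring
          · rw [if_neg h2, if_neg (fun e => h2 e.symm)]; ring
        rw [Finset.sum_congr rfl fun r2 _ => this r2]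
        rw [Finset.sum_ite_eq' Finset.univ k (fun r2 => b j r1 * y (r1, r2) (j', k'))]
        simp [hblk]
      rw [← e1, ← e2, h]
    ext p q
    obtain ⟨j, k⟩ := p
    obtain ⟨j', k'⟩ := q
    have hcomm := hx (blk k k') (hblk_comm k k')
    have e1 : (emb x * y) (j, k) (j', k') = (x * blk k k') j j' := by
      rw [Matrix.mul_apply, Fintype.sum_prod_type, Matrix.mul_apply]
      refine Finset.sum_congr rfl fun r1 _ => ?_
      have : ∀ r2, emb x (j, k) (r1, r2) * y (r1, r2) (j', k')
          = if r2 = k then x j r1 * y (r1, r2) (j', k') else 0 := by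
        intro r2
        rw [emb_apply]
        by_cases h2 : k = r2
        · rw [if_pos h2, if_pos h2.symm]; ring
        · rw [if_neg h2, if_neg (fun e => h2 e.symm)]; ring
      rw [Finset.sum_congr rfl fun r2 _ => this r2]
      rw [Finset.sum_ite_eq' Finset.univ k (fun r2 => x j r1 * y (r1, r2) (j', k'))]
      simp [hblk]
    have e2 : (y * emb x) (j, k) (j', k') = (blk k k' * x) j j' := by
      rw [Matrix.mul_apply, Fintype.sum_prod_type, Matrix.mul_apply]
      refine Finset.sum_congr rfl fun r1 _ => ?_
      have : ∀ r2, y (j, k) (r1, r2) * emb x (r1, r2) (j', k')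
          = if r2 = k' then y (j, k) (r1, r2) * x r1 j' else 0 := by
        intro r2
        rw [emb_apply]
        by_cases h2 : r2 = k'
        · rw [if_pos h2, if_pos h2]; ring
        · rw [if_neg h2, if_neg h2]; ring
      rw [Finset.sum_congr rfl fun r2 _ => this r2]
      rw [Finset.sum_ite_eq' Finset.univ k' (fun r2 => y (j, k) (r1, r2) * x r1 j')]
      simp [hblk]
    rw [e1, e2, hcomm]
  -- apply the single-vector result with the "vectorized identity"
  set v0 : (η × η) → ℂ := fun p => if p.1 = p.2 then 1 else 0 with hv0
  obtain ⟨a2, ha2, hav⟩ := dct_vec B2 h1' hmul' hstar' (emb x) hx2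
    ((WithLp.equiv 2 ((η × η) → ℂ)).symm v0)
  obtain ⟨a, ha, rfl⟩ := ha2
  -- convert to mulVec equality
  rw [WithLp.equiv_symm_apply, Matrix.toEuclideanLin_apply_piLp_toLp, Matrix.toEuclideanLin_apply_piLp_toLp]
    at hav
  have hmv : (embL a) *ᵥ v0 = emb x *ᵥ v0 := by
    have := congrArg WithLp.ofLp hav
    exact this
  have hentry : ∀ (c : Matrix η η ℂ) (j k : η), (emb c *ᵥ v0) (j, k) = c j k := by
    intro c j k
    rw [Matrix.mulVec, dotProduct, Fintype.sum_prod_type]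
    have : ∀ r1 r2, emb c (j, k) (r1, r2) * v0 (r1, r2)
        = if r2 = k then (if r1 = r2 then c j r1 else 0) else 0 := by
      intro r1 r2
      show c j r1 * (if k = r2 then 1 else 0) * (if r1 = r2 then 1 else 0) = _
      by_cases h2 : r2 = k
      · by_cases h1 : r1 = r2
        · rw [if_pos h2.symm, if_pos h1, if_pos h2, if_pos h1]; ring
        · rw [if_pos h2.symm, if_neg h1, if_pos h2, if_neg h1]; ring
      · by_cases h1 : r1 = r2
        · rw [if_neg (fun e => h2 e.symm), if_pos h1, if_neg h2]; ring
        · rw [if_neg (fun e => h2 e.symm), if_neg h1, if_neg h2]; ring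
    rw [Finset.sum_congr rfl fun r1 _ => Finset.sum_congr rfl fun r2 _ => this r1 r2]
    rw [Finset.sum_congr rfl fun r1 _ =>
      Finset.sum_ite_eq' Finset.univ k (fun r2 => if r1 = r2 then c j r1 else 0)]
    simp only [Finset.mem_univ, if_true]
    rw [Finset.sum_ite_eq' Finset.univ k (fun r1 => c j r1)]
    simp
  have hax : a = x := by
    ext j k
    have h1e := hentry a j k
    have h2e := hentry x j k
    rw [← h1e, ← h2e]
    show ((embL a) *ᵥ v0) (j, k) = _
    rw [hmv]
  rw [← hax]
  exact ha

end SW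

namespace SW

variable {N n : ℕ} {d : Fin N → ℕ}

lemma P_span_one : (1 : Matrix (∀ i, Fin n → Fin (d i)) (∀ i, Fin n → Fin (d i)) ℂ) ∈
    Submodule.span ℂ {Y : Matrix (∀ i, Fin n → Fin (d i)) (∀ i, Fin n → Fin (d i)) ℂ |
      ∃ π : Fin N → Equiv.Perm (Fin n), Y = permTensorMatFam d n π} :=
  Submodule.subset_span ⟨fun _ => 1, P_one.symm⟩

lemma P_span_mul : ∀ a ∈ Submodule.span ℂ
      {Y : Matrix (∀ i, Fin n → Fin (d i)) (∀ i, Fin n → Fin (d i)) ℂ |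
        ∃ π : Fin N → Equiv.Perm (Fin n), Y = permTensorMatFam d n π},
    ∀ b ∈ Submodule.span ℂ
      {Y : Matrix (∀ i, Fin n → Fin (d i)) (∀ i, Fin n → Fin (d i)) ℂ |
        ∃ π : Fin N → Equiv.Perm (Fin n), Y = permTensorMatFam d n π},
    a * b ∈ Submodule.span ℂ
      {Y : Matrix (∀ i, Fin n → Fin (d i)) (∀ i, Fin n → Fin (d i)) ℂ |
        ∃ π : Fin N → Equiv.Perm (Fin n), Y = permTensorMatFam d n π} := by
  intro a ha
  induction ha using Submodule.span_induction with
  | mem a' ha' =>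
    intro b hb
    induction hb using Submodule.span_induction with
    | mem b' hb' =>
      obtain ⟨π, rfl⟩ := ha'
      obtain ⟨π', rfl⟩ := hb'
      rw [P_mul]
      exact Submodule.subset_span ⟨_, rfl⟩
    | zero => rw [mul_zero]; exact Submodule.zero_mem _
    | add x y hx hy ihx ihy => rw [mul_add]; exact Submodule.add_mem _ ihx ihy
    | smul c x hx ihx => rw [mul_smul_comm]; exact Submodule.smul_mem _ c ihx
  | zero => intro b _; rw [zero_mul]; exact Submodule.zero_mem _
  | add x y hx hy ihx ihy =>
    intro b hb; rw [add_mul]; exact Submodule.add_mem _ (ihx b hb) (ihy b hb)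
  | smul c x hx ihx =>
    intro b hb; rw [smul_mul_assoc]; exact Submodule.smul_mem _ c (ihx b hb)

lemma P_span_star : ∀ a ∈ Submodule.span ℂ
      {Y : Matrix (∀ i, Fin n → Fin (d i)) (∀ i, Fin n → Fin (d i)) ℂ |
        ∃ π : Fin N → Equiv.Perm (Fin n), Y = permTensorMatFam d n π},
    aᴴ ∈ Submodule.span ℂ
      {Y : Matrix (∀ i, Fin n → Fin (d i)) (∀ i, Fin n → Fin (d i)) ℂ |
        ∃ π : Fin N → Equiv.Perm (Fin n), Y = permTensorMatFam d n π} := by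
  intro a ha
  induction ha using Submodule.span_induction with
  | mem a' ha' =>
    obtain ⟨π, rfl⟩ := ha'
    rw [P_star]
    exact Submodule.subset_span ⟨_, rfl⟩
  | zero => rw [Matrix.conjTranspose_zero]; exact Submodule.zero_mem _
  | add x y hx hy ihx ihy => rw [Matrix.conjTranspose_add]; exact Submodule.add_mem _ ihx ihy
  | smul c x hx ihx =>
    rw [Matrix.conjTranspose_smul]
    exact Submodule.smul_mem _ _ ihx

lemma comm_of_mem_Qspan {X : Matrix (∀ i, Fin n → Fin (d i)) (∀ i, Fin n → Fin (d i)) ℂ}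
    (hX : ∀ U : ∀ i, Matrix (Fin (d i)) (Fin (d i)) ℂ,
      (∀ i, U i ∈ Matrix.unitaryGroup (Fin (d i)) ℂ) →
      X * collectiveMatFam d n U = collectiveMatFam d n U * X)
    {z : Matrix (∀ i, Fin n → Fin (d i)) (∀ i, Fin n → Fin (d i)) ℂ}
    (hz : z ∈ Submodule.span ℂ
      {Y : Matrix (∀ i, Fin n → Fin (d i)) (∀ i, Fin n → Fin (d i)) ℂ |
        ∃ U : ∀ i, Matrix (Fin (d i)) (Fin (d i)) ℂ,
          (∀ i, U i ∈ Matrix.unitaryGroup (Fin (d i)) ℂ) ∧ Y = collectiveMatFam d n U}) :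
    X * z = z * X := by
  induction hz using Submodule.span_induction with
  | mem z hzm =>
    obtain ⟨U, hU, rfl⟩ := hzm
    exact hX U hU
  | zero => rw [mul_zero, zero_mul]
  | add u w hu hw ihu ihw => rw [mul_add, add_mul, ihu, ihw]
  | smul c u hu ihu => rw [mul_smul_comm, smul_mul_assoc, ihu]

end SW

theorem generalized_schur_weyl_duality
    (N n : ℕ) (hN : 1 ≤ N) (hn : 1 ≤ n) (d : Fin N → ℕ) (hd : ∀ i, 1 ≤ d i)
    (X : Matrix (∀ i, Fin n → Fin (d i)) (∀ i, Fin n → Fin (d i)) ℂ) :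
    ((∀ π : Fin N → Equiv.Perm (Fin n),
        X * permTensorMatFam d n π = permTensorMatFam d n π * X) ↔
      X ∈ Submodule.span ℂ
        {Y : Matrix (∀ i, Fin n → Fin (d i)) (∀ i, Fin n → Fin (d i)) ℂ |
          ∃ U : ∀ i, Matrix (Fin (d i)) (Fin (d i)) ℂ,
            (∀ i, U i ∈ Matrix.unitaryGroup (Fin (d i)) ℂ) ∧
            Y = collectiveMatFam d n U}) ∧
    ((∀ U : ∀ i, Matrix (Fin (d i)) (Fin (d i)) ℂ,
        (∀ i, U i ∈ Matrix.unitaryGroup (Fin (d i)) ℂ) →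
        X * collectiveMatFam d n U = collectiveMatFam d n U * X) ↔
      X ∈ Submodule.span ℂ
        {Y : Matrix (∀ i, Fin n → Fin (d i)) (∀ i, Fin n → Fin (d i)) ℂ |
          ∃ π : Fin N → Equiv.Perm (Fin n), Y = permTensorMatFam d n π}) := by
  constructor
  · constructor
    · exact fun hX => SW.part_a_hard hX
    · exact fun hX π => SW.comm_P_of_mem hX π
  · constructor
    · intro hX
      apply SW.double_commutant _ SW.P_span_one SW.P_span_mul SW.P_span_star X
      intro y hy
      have hyP : ∀ π : Fin N → Equiv.Perm (Fin n),
          y * permTensorMatFam d n π = permTensorMatFam d n π * y :=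
        fun π => hy _ (Submodule.subset_span ⟨π, rfl⟩)
      exact SW.comm_of_mem_Qspan hX (SW.part_a_hard hyP)
    · intro hX U hU
      exact SW.comm_Q_of_mem hX U
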